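/- There exists an absolute constant C > 0 with the following property: for every sequence (a_n)_{n≥1} of complex numbers with sup_n |a_n| ≤ 1 and every positive integer H, limsup_{N→∞} sup_{t∈ℝ} | (1/N) ∑_{n=1}^{N} a_n e^{2πint} |² ≤ C/H + (C/H) ∑_{h=1}^{H} limsup_{N→∞} | (1/N) ∑_{n=1}^{N} a_n · conj(a_{n+h}) |. -/

import Mathlib

open Filter

open Finset




lemma vdc_abs_sum_le_card (s : Finset ℕ) (c : ℕ → ℂ) (hc : ∀ n, ‖c n‖ ≤ 1) :
    ‖∑ n ∈ s, c n‖ ≤ s.card := by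
  calc ‖∑ n ∈ s, c n‖ ≤ ∑ n ∈ s, ‖c n‖ := by
        simpa using norm_sum_le s c
    _ ≤ ∑ _n ∈ s, (1 : ℝ) := sum_le_sum fun n _ => hc n
    _ = s.card := by simp

lemma vdc_shift_sum (c : ℕ → ℂ) (hc : ∀ n, ‖c n‖ ≤ 1) (N h : ℕ) :
    ‖(∑ n ∈ Icc 1 N, c (n + h)) - ∑ n ∈ Icc 1 N, c n‖ ≤ 2 * h := by
  have hmap : ∑ n ∈ Icc 1 N, c (n + h) = ∑ m ∈ Icc (1 + h) (N + h), c m := by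
    rw [← map_add_right_Icc, sum_map]; rfl
  set A := Icc (1 + h) (N + h) with hA
  set B := Icc 1 N with hB
  have h1 : ∑ m ∈ A, c m - ∑ m ∈ B, c m = ∑ m ∈ A \ B, c m - ∑ m ∈ B \ A, c m := by
    rw [← sum_inter_add_sum_sdiff A B c, ← sum_inter_add_sum_sdiff B A c, inter_comm]
    ring
  have hsub1 : A \ B ⊆ Icc (N + 1) (N + h) := by
    intro m hm
    simp only [hA, hB, Finset.mem_sdiff, mem_Icc, not_and, not_le] at hm ⊢
    omega
  have hsub2 : B \ A ⊆ Icc 1 h := by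
    intro m hm
    simp only [hA, hB, Finset.mem_sdiff, mem_Icc, not_and, not_le] at hm ⊢
    omega
  have c1 : ((A \ B).card : ℝ) ≤ h := by
    have := card_le_card hsub1
    have : (A \ B).card ≤ h := by simpa [Nat.card_Icc] using this
    exact_mod_cast this
  have c2 : ((B \ A).card : ℝ) ≤ h := by
    have := card_le_card hsub2
    have : (B \ A).card ≤ h := by simpa [Nat.card_Icc] using this
    exact_mod_cast this
  rw [hmap, h1]
  calc ‖∑ m ∈ A \ B, c m - ∑ m ∈ B \ A, c m‖
      ≤ ‖∑ m ∈ A \ B, c m‖ + ‖∑ m ∈ B \ A, c m‖ :=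
        by simpa using norm_sub_le _ _
    _ ≤ ((A \ B).card : ℝ) + ((B \ A).card : ℝ) :=
        add_le_add (vdc_abs_sum_le_card _ _ hc) (vdc_abs_sum_le_card _ _ hc)
    _ ≤ 2 * h := by linarith


lemma vdc_corr_abs_le (b : ℕ → ℂ) (hb : ∀ n, ‖b n‖ ≤ 1) (n d : ℕ) :
    ‖b n * (starRingEnd ℂ) (b (n + d))‖ ≤ 1 := by
  rw [norm_mul, Complex.norm_conj]
  exact mul_le_one₀ (hb n) (norm_nonneg _) (hb (n + d))

lemma vdc_pair (b : ℕ → ℂ) (hb : ∀ n, ‖b n‖ ≤ 1) (N h d : ℕ) :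
    ‖∑ n ∈ Icc 1 N, b (n + h) * (starRingEnd ℂ) (b (n + h + d))‖
      ≤ ‖∑ n ∈ Icc 1 N, b n * (starRingEnd ℂ) (b (n + d))‖ + 2 * h := by
  have key := vdc_shift_sum (fun n => b n * (starRingEnd ℂ) (b (n + d)))
    (fun n => vdc_corr_abs_le b hb n d) N h
  set X := ∑ n ∈ Icc 1 N, b (n + h) * (starRingEnd ℂ) (b (n + h + d)) with hX
  set Y := ∑ n ∈ Icc 1 N, b n * (starRingEnd ℂ) (b (n + d)) with hY
  have : ‖X - Y‖ ≤ 2 * h := key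
  calc ‖X‖ = ‖(X - Y) + Y‖ := by ring_nf
    _ ≤ ‖X - Y‖ + ‖Y‖ := norm_add_le _ _
    _ ≤ ‖Y‖ + 2 * h := by linarith

lemma vdc_pair' (b : ℕ → ℂ) (hb : ∀ n, ‖b n‖ ≤ 1) (N H h h' : ℕ)
    (hh : h ≤ H) (hh' : h' ≤ H) :
    ‖∑ n ∈ Icc 1 N, b (n + h) * (starRingEnd ℂ) (b (n + h'))‖
      ≤ ‖∑ n ∈ Icc 1 N,
          b n * (starRingEnd ℂ) (b (n + ((h - h') + (h' - h))))‖ + 2 * H := by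
  rcases le_total h h' with hle | hle
  · have hd2 : (h - h') + (h' - h) = h' - h := by omega
    rw [hd2]
    have hrw : ∀ n ∈ Icc 1 N, b (n + h) * (starRingEnd ℂ) (b (n + h'))
        = b (n + h) * (starRingEnd ℂ) (b (n + h + (h' - h))) := by
      intro n _; rw [show n + h + (h' - h) = n + h' from by omega]
    rw [Finset.sum_congr rfl hrw]
    have := vdc_pair b hb N h (h' - h)
    have h2 : (2:ℝ) * h ≤ 2 * H := by exact_mod_cast by omega
    linarith
  · have hd2 : (h - h') + (h' - h) = h - h' := by omega
    rw [hd2]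
    have hconj : ∑ n ∈ Icc 1 N, b (n + h) * (starRingEnd ℂ) (b (n + h'))
        = (starRingEnd ℂ) (∑ n ∈ Icc 1 N, b (n + h') * (starRingEnd ℂ) (b (n + h))) := by
      rw [map_sum]
      refine Finset.sum_congr rfl fun n _ => ?_
      rw [map_mul, Complex.conj_conj]; ring
    rw [hconj, Complex.norm_conj]
    have hrw : ∀ n ∈ Icc 1 N, b (n + h') * (starRingEnd ℂ) (b (n + h))
        = b (n + h') * (starRingEnd ℂ) (b (n + h' + (h - h'))) := by
      intro n _; rw [show n + h' + (h - h') = n + h from by omega]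
    rw [Finset.sum_congr rfl hrw]
    have := vdc_pair b hb N h' (h - h')
    have h2 : (2:ℝ) * h' ≤ 2 * H := by exact_mod_cast by omega
    linarith


-- Step 5: row sum of D over |h - h'| bounded by twice full sum
lemma vdc_row_sum (D : ℕ → ℝ) (hD : ∀ d, 0 ≤ D d) (H h : ℕ) (h1 : 1 ≤ h) (h2 : h ≤ H) :
    ∑ h' ∈ Icc 1 H, D ((h - h') + (h' - h)) ≤ 2 * ∑ d ∈ range (H + 1), D d := by
  have hsplit : ∑ h' ∈ Ioc 0 h, D ((h - h') + (h' - h))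
      + ∑ h' ∈ Ioc h H, D ((h - h') + (h' - h))
      = ∑ h' ∈ Ioc 0 H, D ((h - h') + (h' - h)) :=
    Finset.sum_Ioc_consecutive _ (Nat.zero_le h) h2
  have hIcc : Icc 1 H = Ioc 0 H := by ext x; simp [Nat.lt_iff_add_one_le]
  rw [hIcc, ← hsplit]
  have p1 : ∑ h' ∈ Ioc 0 h, D ((h - h') + (h' - h)) ≤ ∑ d ∈ range (H + 1), D d := by
    rw [show ∑ h' ∈ Ioc 0 h, D ((h - h') + (h' - h)) = ∑ h' ∈ Ioc 0 h, D (h - h') from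
      Finset.sum_congr rfl fun h' hh' => by
        have := Finset.mem_Ioc.mp hh'; congr 1; omega]
    have hbij : ∑ h' ∈ Ioc 0 h, D (h - h') = ∑ d ∈ Ico 0 h, D d := by
      refine Finset.sum_nbij' (fun h' => h - h') (fun d => h - d) ?_ ?_ ?_ ?_ ?_
      · intro x hx; have := Finset.mem_Ioc.mp hx; simp only [Finset.mem_Ico]; omega
      · intro x hx; have := Finset.mem_Ico.mp hx; simp only [Finset.mem_Ioc]; omega
      · intro x hx; have := Finset.mem_Ioc.mp hx; omega
      · intro x hx; have := Finset.mem_Ico.mp hx; omega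
      · intro x hx; rfl
    rw [hbij]
    refine Finset.sum_le_sum_of_subset_of_nonneg ?_ (fun d _ _ => hD d)
    intro x hx; have := Finset.mem_Ico.mp hx; simp only [Finset.mem_range]; omega
  have p2 : ∑ h' ∈ Ioc h H, D ((h - h') + (h' - h)) ≤ ∑ d ∈ range (H + 1), D d := by
    rw [show ∑ h' ∈ Ioc h H, D ((h - h') + (h' - h)) = ∑ h' ∈ Ioc h H, D (h' - h) from
      Finset.sum_congr rfl fun h' hh' => by
        have := Finset.mem_Ioc.mp hh'; congr 1; omega]
    have hbij : ∑ h' ∈ Ioc h H, D (h' - h) = ∑ d ∈ Ioc 0 (H - h), D d := by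
      refine Finset.sum_nbij' (fun h' => h' - h) (fun d => d + h) ?_ ?_ ?_ ?_ ?_
      · intro x hx; have := Finset.mem_Ioc.mp hx; simp only [Finset.mem_Ioc]; omega
      · intro x hx; have := Finset.mem_Ioc.mp hx; simp only [Finset.mem_Ioc]; omega
      · intro x hx; have := Finset.mem_Ioc.mp hx; omega
      · intro x hx; have := Finset.mem_Ioc.mp hx; omega
      · intro x hx; rfl
    rw [hbij]
    refine Finset.sum_le_sum_of_subset_of_nonneg ?_ (fun d _ _ => hD d)
    intro x hx; have := Finset.mem_Ioc.mp hx; simp only [Finset.mem_range]; omega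
  linarith

lemma vdc_range_split (D : ℕ → ℝ) (H : ℕ) :
    ∑ d ∈ range (H + 1), D d = D 0 + ∑ d ∈ Icc 1 H, D d := by
  rw [Finset.sum_range_succ' D H]
  have : ∑ i ∈ range H, D (i + 1) = ∑ d ∈ Icc 1 H, D d := by
    rw [show Icc 1 H = Ico 1 (H + 1) from by rw [Finset.Ico_add_one_right_eq_Icc],
      Finset.sum_Ico_eq_sum_range]
    simp [add_comm]
  rw [this]; ring


lemma vdc_finitary (b : ℕ → ℂ) (hb : ∀ n, ‖b n‖ ≤ 1) (N H : ℕ) (hH : 1 ≤ H) :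
    ((H : ℝ) * ‖∑ n ∈ Icc 1 N, b n‖) ^ 2
      ≤ 4 * H ^ 3 * N + 4 * H * N ^ 2
        + 4 * H * N * (∑ d ∈ Icc 1 H, ‖∑ n ∈ Icc 1 N,
            b n * (starRingEnd ℂ) (b (n + d))‖) + 8 * H ^ 4 := by
  set S : ℂ := ∑ n ∈ Icc 1 N, b n with hS
  set c : ℕ → ℂ := fun n => ∑ h ∈ Icc 1 H, b (n + h) with hc
  set D : ℕ → ℝ := fun d => ‖∑ n ∈ Icc 1 N, b n * (starRingEnd ℂ) (b (n + d))‖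
    with hD
  have hDpos : ∀ d, 0 ≤ D d := fun d => norm_nonneg _
  -- Step 1 : H * |S| ≤ ∑ |c n| + 2 H^2
  have step1 : (H : ℝ) * ‖S‖ ≤ (∑ n ∈ Icc 1 N, ‖c n‖) + 2 * H ^ 2 := by
    have key : (∑ n ∈ Icc 1 N, c n) - (H : ℂ) * S
        = ∑ h ∈ Icc 1 H, ((∑ n ∈ Icc 1 N, b (n + h)) - S) := by
      rw [Finset.sum_sub_distrib, Finset.sum_const, Nat.card_Icc]
      simp only [hc]
      rw [Finset.sum_comm]
      simp [nsmul_eq_mul]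
    have keybound : ‖(∑ n ∈ Icc 1 N, c n) - (H : ℂ) * S‖ ≤ 2 * H ^ 2 := by
      rw [key]
      calc ‖∑ h ∈ Icc 1 H, ((∑ n ∈ Icc 1 N, b (n + h)) - S)‖
          ≤ ∑ h ∈ Icc 1 H, ‖(∑ n ∈ Icc 1 N, b (n + h)) - S‖ := by
            simpa using
              norm_sum_le (Icc 1 H) (fun h => (∑ n ∈ Icc 1 N, b (n + h)) - S)
        _ ≤ ∑ h ∈ Icc 1 H, (2 * (h : ℝ)) :=
            Finset.sum_le_sum fun h _ => vdc_shift_sum b hb N h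
        _ ≤ ∑ _h ∈ Icc 1 H, (2 * (H : ℝ)) := by
            refine Finset.sum_le_sum fun h hh => ?_
            have h2 := (Finset.mem_Icc.mp hh).2
            have : (h : ℝ) ≤ H := by exact_mod_cast h2
            linarith
        _ = 2 * H ^ 2 := by simp [Nat.card_Icc]; ring
    have tri : (H : ℝ) * ‖S‖ = ‖(H : ℂ) * S‖ := by
      rw [norm_mul, Complex.norm_natCast]
    rw [tri]
    calc ‖(H : ℂ) * S‖
        = ‖(∑ n ∈ Icc 1 N, c n)
            - ((∑ n ∈ Icc 1 N, c n) - (H : ℂ) * S)‖ := by rw [sub_sub_cancel]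
      _ ≤ ‖∑ n ∈ Icc 1 N, c n‖
          + ‖(∑ n ∈ Icc 1 N, c n) - (H : ℂ) * S‖ := by
          simpa using
            norm_sub_le (∑ n ∈ Icc 1 N, c n) ((∑ n ∈ Icc 1 N, c n) - (H : ℂ) * S)
      _ ≤ (∑ n ∈ Icc 1 N, ‖c n‖) + 2 * H ^ 2 := by
          refine add_le_add ?_ keybound
          simpa using norm_sum_le (Icc 1 N) c
  -- Step 2 : Cauchy–Schwarz
  have step2 : (∑ n ∈ Icc 1 N, ‖c n‖) ^ 2
      ≤ (N : ℝ) * ∑ n ∈ Icc 1 N, (‖c n‖) ^ 2 := by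
    have := Finset.sum_mul_sq_le_sq_mul_sq (Icc 1 N) (fun _ => (1 : ℝ))
      (fun n => ‖c n‖)
    simpa [Nat.card_Icc] using this
  -- Step 3 : expansion
  have habs2 : ∀ z : ℂ, (‖z‖) ^ 2 = (z * (starRingEnd ℂ) z).re := fun z => by
    rw [Complex.mul_conj, Complex.ofReal_re, ← Complex.sq_norm]
  have step3 : ∑ n ∈ Icc 1 N, (‖c n‖) ^ 2
      ≤ ∑ h ∈ Icc 1 H, ∑ h' ∈ Icc 1 H,
          ‖∑ n ∈ Icc 1 N, b (n + h) * (starRingEnd ℂ) (b (n + h'))‖ := by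
    have e1 : ∑ n ∈ Icc 1 N, (‖c n‖) ^ 2
        = (∑ h ∈ Icc 1 H, ∑ h' ∈ Icc 1 H,
            ∑ n ∈ Icc 1 N, b (n + h) * (starRingEnd ℂ) (b (n + h'))).re := by
      have e2 : ∀ n, (‖c n‖) ^ 2
          = (∑ h ∈ Icc 1 H, ∑ h' ∈ Icc 1 H, b (n + h) * (starRingEnd ℂ) (b (n + h'))).re := by
        intro n
        rw [habs2, hc]
        dsimp only
        rw [map_sum, Finset.sum_mul_sum]
      rw [Finset.sum_congr rfl fun n _ => e2 n, ← Complex.re_sum]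
      congr 1
      rw [Finset.sum_comm]
      exact Finset.sum_congr rfl fun h _ => Finset.sum_comm
    rw [e1, Complex.re_sum]
    refine Finset.sum_le_sum fun h _ => ?_
    rw [Complex.re_sum]
    exact Finset.sum_le_sum fun h' _ => Complex.re_le_norm _
  -- Step 4+5+6 : bound the double sum
  have step4 : ∑ h ∈ Icc 1 H, ∑ h' ∈ Icc 1 H,
        ‖∑ n ∈ Icc 1 N, b (n + h) * (starRingEnd ℂ) (b (n + h'))‖
      ≤ 2 * H * N + 2 * H * (∑ d ∈ Icc 1 H, D d) + 2 * H ^ 3 := by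
    have hD0 : D 0 ≤ N := by
      have := vdc_abs_sum_le_card (Icc 1 N) (fun n => b n * (starRingEnd ℂ) (b (n + 0)))
        (fun n => vdc_corr_abs_le b hb n 0)
      simpa [hD, Nat.card_Icc] using this
    have row : ∀ h ∈ Icc 1 H, ∑ h' ∈ Icc 1 H,
          ‖∑ n ∈ Icc 1 N, b (n + h) * (starRingEnd ℂ) (b (n + h'))‖
        ≤ 2 * (N + ∑ d ∈ Icc 1 H, D d) + 2 * H * H := by
      intro h hh
      obtain ⟨hh1, hh2⟩ := Finset.mem_Icc.mp hh
      calc ∑ h' ∈ Icc 1 H, ‖∑ n ∈ Icc 1 N, b (n + h) * (starRingEnd ℂ) (b (n + h'))‖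
          ≤ ∑ h' ∈ Icc 1 H, (D ((h - h') + (h' - h)) + 2 * H) := by
            refine Finset.sum_le_sum fun h' hh' => ?_
            exact vdc_pair' b hb N H h h' hh2 (Finset.mem_Icc.mp hh').2
        _ = (∑ h' ∈ Icc 1 H, D ((h - h') + (h' - h))) + 2 * H * H := by
            rw [Finset.sum_add_distrib, Finset.sum_const, Nat.card_Icc]
            simp [nsmul_eq_mul]; ring
        _ ≤ 2 * (∑ d ∈ range (H + 1), D d) + 2 * H * H := by
            have := vdc_row_sum D hDpos H h hh1 hh2
            linarith
        _ ≤ 2 * (N + ∑ d ∈ Icc 1 H, D d) + 2 * H * H := by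
            rw [vdc_range_split D H]
            have : D 0 + ∑ d ∈ Icc 1 H, D d ≤ N + ∑ d ∈ Icc 1 H, D d := by linarith
            linarith
    calc ∑ h ∈ Icc 1 H, ∑ h' ∈ Icc 1 H,
          ‖∑ n ∈ Icc 1 N, b (n + h) * (starRingEnd ℂ) (b (n + h'))‖
        ≤ ∑ _h ∈ Icc 1 H, (2 * ((N : ℝ) + ∑ d ∈ Icc 1 H, D d) + 2 * H * H) :=
          Finset.sum_le_sum row
      _ = H * (2 * ((N : ℝ) + ∑ d ∈ Icc 1 H, D d) + 2 * H * H) := by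
          rw [Finset.sum_const, Nat.card_Icc]; simp [nsmul_eq_mul]; ring
      _ = 2 * H * N + 2 * H * (∑ d ∈ Icc 1 H, D d) + 2 * H ^ 3 := by ring
  -- assemble
  have hXpos : 0 ≤ ∑ n ∈ Icc 1 N, ‖c n‖ :=
    Finset.sum_nonneg fun n _ => norm_nonneg _
  have hSpos : 0 ≤ ‖S‖ := norm_nonneg _
  have hHpos : (0:ℝ) ≤ H := Nat.cast_nonneg H
  have hNpos : (0:ℝ) ≤ N := Nat.cast_nonneg N
  set X := ∑ n ∈ Icc 1 N, ‖c n‖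
  set Q := ∑ n ∈ Icc 1 N, (‖c n‖) ^ 2
  set Sr := ∑ d ∈ Icc 1 H, D d
  have hSrpos : 0 ≤ Sr := Finset.sum_nonneg fun d _ => hDpos d
  have f1 : ((H : ℝ) * ‖S‖) ^ 2 ≤ (X + 2 * H ^ 2) ^ 2 :=
    pow_le_pow_left₀ (by positivity) step1 2
  have f2 : (X + 2 * H ^ 2) ^ 2 ≤ 2 * X ^ 2 + 8 * H ^ 4 := by nlinarith [sq_nonneg (X - 2 * H ^ 2)]
  have f3 : Q ≤ 2 * H * N + 2 * H * Sr + 2 * H ^ 3 := le_trans step3 step4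
  have f4 : X ^ 2 ≤ N * Q := step2
  nlinarith [mul_le_mul_of_nonneg_left f3 hNpos]


lemma vdc_exp_form (t : ℝ) (m : ℕ) :
    2 * (Real.pi : ℂ) * Complex.I * (m : ℂ) * (t : ℂ)
      = ((2 * Real.pi * m * t : ℝ) : ℂ) * Complex.I := by
  push_cast; ring

lemma vdc_abs_exp (t : ℝ) (m : ℕ) :
    ‖Complex.exp (2 * (Real.pi : ℂ) * Complex.I * (m : ℂ) * (t : ℂ))‖ = 1 := by
  rw [vdc_exp_form, Complex.norm_exp_ofReal_mul_I]

lemma vdc_corr_transfer (a : ℕ → ℂ) (t : ℝ) (N d : ℕ) :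
    ‖∑ n ∈ Icc 1 N,
        (a n * Complex.exp (2 * (Real.pi : ℂ) * Complex.I * (n : ℂ) * (t : ℂ)))
          * (starRingEnd ℂ) (a (n + d)
              * Complex.exp (2 * (Real.pi : ℂ) * Complex.I * ((n + d : ℕ) : ℂ) * (t : ℂ)))‖
      = ‖∑ n ∈ Icc 1 N, a n * (starRingEnd ℂ) (a (n + d))‖ := by
  have hterm : ∀ n : ℕ,
      (a n * Complex.exp (2 * (Real.pi : ℂ) * Complex.I * (n : ℂ) * (t : ℂ)))
          * (starRingEnd ℂ) (a (n + d)
              * Complex.exp (2 * (Real.pi : ℂ) * Complex.I * ((n + d : ℕ) : ℂ) * (t : ℂ)))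
        = (a n * (starRingEnd ℂ) (a (n + d)))
            * Complex.exp (((-(2 * Real.pi * d * t) : ℝ) : ℂ) * Complex.I) := by
    intro n
    rw [map_mul, vdc_exp_form, vdc_exp_form, ← Complex.exp_conj]
    have hconj : (starRingEnd ℂ) (((2 * Real.pi * (n + d : ℕ) * t : ℝ) : ℂ) * Complex.I)
        = -(((2 * Real.pi * (n + d : ℕ) * t : ℝ) : ℂ) * Complex.I) := by
      rw [map_mul, Complex.conj_ofReal, Complex.conj_I]; ring
    rw [hconj]
    rw [show ((-(2 * Real.pi * d * t) : ℝ) : ℂ) * Complex.I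
        = ((2 * Real.pi * n * t : ℝ) : ℂ) * Complex.I
            + -(((2 * Real.pi * (n + d : ℕ) * t : ℝ) : ℂ) * Complex.I) from by push_cast; ring]
    rw [Complex.exp_add]
    ring
  rw [Finset.sum_congr rfl fun n _ => hterm n, ← Finset.sum_mul, norm_mul,
    Complex.norm_exp_ofReal_mul_I, mul_one]

lemma vdc_pointwise (a : ℕ → ℂ) (ha : ∀ n, ‖a n‖ ≤ 1) (H : ℕ) (hH : 1 ≤ H)
    (N : ℕ) (hN : 1 ≤ N) (t : ℝ) :
    ‖(1 / (N : ℂ)) * ∑ n ∈ Finset.Icc 1 N,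
        a n * Complex.exp (2 * (Real.pi : ℂ) * Complex.I * (n : ℂ) * (t : ℂ))‖ ^ 2
      ≤ 4 / H + (4 / H) * (∑ h ∈ Finset.Icc 1 H,
            ‖(1 / (N : ℂ)) * ∑ n ∈ Finset.Icc 1 N,
              a n * (starRingEnd ℂ) (a (n + h))‖)
        + (4 * H + 8 * H ^ 2) / N := by
  set b : ℕ → ℂ := fun n => a n * Complex.exp (2 * (Real.pi : ℂ) * Complex.I * (n : ℂ) * (t : ℂ))
    with hbdef
  have hb : ∀ n, ‖b n‖ ≤ 1 := by
    intro n
    rw [hbdef]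
    dsimp only
    rw [norm_mul, vdc_abs_exp, mul_one]
    exact ha n
  have hfin := vdc_finitary b hb N H hH
  have hNC : ((N : ℂ)) ≠ 0 := by exact_mod_cast Nat.cast_ne_zero.mpr (by omega)
  have hNR : (0 : ℝ) < N := by exact_mod_cast hN
  have hHR : (0 : ℝ) < H := by exact_mod_cast hH
  have habs_div : ∀ z : ℂ, ‖(1 / (N : ℂ)) * z‖ = ‖z‖ / N := by
    intro z
    rw [norm_mul, norm_div, norm_one, Complex.norm_natCast, div_mul_eq_mul_div, one_mul]
  set u : ℝ := ‖(1 / (N : ℂ)) * ∑ n ∈ Finset.Icc 1 N, b n‖ with hu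
  set r : ℕ → ℝ := fun h => ‖(1 / (N : ℂ)) * ∑ n ∈ Finset.Icc 1 N,
      a n * (starRingEnd ℂ) (a (n + h))‖ with hr
  have hSb : ‖∑ n ∈ Finset.Icc 1 N, b n‖ = N * u := by
    rw [hu, habs_div]; field_simp
  have hDb : ∀ d, ‖∑ n ∈ Icc 1 N, b n * (starRingEnd ℂ) (b (n + d))‖
      = N * r d := by
    intro d
    have := vdc_corr_transfer a t N d
    rw [hbdef]
    dsimp only
    rw [this, hr]
    dsimp only
    rw [habs_div]
    field_simp
  rw [hSb] at hfin
  have hDs : ∑ d ∈ Icc 1 H, ‖∑ n ∈ Icc 1 N, b n * (starRingEnd ℂ) (b (n + d))‖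
      = N * ∑ h ∈ Icc 1 H, r h := by
    rw [Finset.mul_sum]; exact Finset.sum_congr rfl fun d _ => hDb d
  rw [hDs] at hfin
  set Sr : ℝ := ∑ h ∈ Icc 1 H, r h with hSr
  have hSrpos : 0 ≤ Sr := Finset.sum_nonneg fun d _ => norm_nonneg _
  -- goal is about u and Sr now
  show u ^ 2 ≤ 4 / H + (4 / H) * Sr + (4 * H + 8 * H ^ 2) / N
  have hkey : u ^ 2 * ((H : ℝ) ^ 2 * N ^ 2)
      ≤ (4 / H + (4 / H) * Sr + (4 * H + 8 * H ^ 2) / N) * ((H : ℝ) ^ 2 * N ^ 2) := by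
    have hexp : (4 / H + (4 / H) * Sr + (4 * H + 8 * H ^ 2) / N) * ((H : ℝ) ^ 2 * N ^ 2)
        = 4 * H * N ^ 2 + 4 * H * N ^ 2 * Sr + 4 * H ^ 3 * N + 8 * H ^ 4 * N := by
      field_simp
      ring
    rw [hexp]
    have h1 : u ^ 2 * ((H : ℝ) ^ 2 * N ^ 2) = ((H : ℝ) * (N * u)) ^ 2 := by ring
    rw [h1]
    have hN1 : (1 : ℝ) ≤ N := by exact_mod_cast hN
    have hH4 : (0 : ℝ) ≤ (H : ℝ) ^ 4 := by positivity
    nlinarith [hfin]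
  exact le_of_mul_le_mul_right hkey (by positivity)


lemma vdc_norm_avg_le_one (c : ℕ → ℂ) (hc : ∀ n, ‖c n‖ ≤ 1) (N : ℕ) :
    ‖(1 / (N : ℂ)) * ∑ n ∈ Finset.Icc 1 N, c n‖ ≤ 1 := by
  rcases Nat.eq_zero_or_pos N with rfl | hN
  · simp
  · have h1 : ‖(1 / (N : ℂ)) * ∑ n ∈ Finset.Icc 1 N, c n‖
        = ‖∑ n ∈ Finset.Icc 1 N, c n‖ / N := by
      rw [norm_mul, norm_div, norm_one, Complex.norm_natCast, div_mul_eq_mul_div, one_mul]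
    rw [h1]
    have h2 := vdc_abs_sum_le_card (Finset.Icc 1 N) c hc
    rw [Nat.card_Icc] at h2
    have hNR : (0 : ℝ) < N := by exact_mod_cast hN
    rw [div_le_one hNR]
    calc ‖∑ n ∈ Finset.Icc 1 N, c n‖ ≤ ((N + 1 - 1 : ℕ) : ℝ) := h2
      _ = N := by simp


/-- the limsup Wiener–Wintner van der Corput inequality: there is an absolute
constant `C > 0` such that for every complex sequence with `|aₙ| ≤ 1` and every `H ≥ 1`,
`limsup_N sup_t |(1/N) ∑_{n=1}^N aₙ e^{2πint}|²
  ≤ C/H + (C/H) ∑_{h=1}^H limsup_N |(1/N) ∑_{n=1}^N aₙ conj(a_{n+h})|`. -/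
theorem vdc_wiener_wintner_limsup :
    ∃ C : ℝ, 0 < C ∧
      ∀ (a : ℕ → ℂ), (∀ n, ‖a n‖ ≤ 1) →
      ∀ (H : ℕ), 1 ≤ H →
        limsup (fun N : ℕ =>
            ⨆ t : ℝ, ‖(1 / (N : ℂ)) * ∑ n ∈ Finset.Icc 1 N,
              a n * Complex.exp (2 * (Real.pi : ℂ) * Complex.I * (n : ℂ) * (t : ℂ))‖ ^ 2)
          atTop
          ≤ C / H + (C / H) * ∑ h ∈ Finset.Icc 1 H,
              limsup (fun N : ℕ =>
                ‖(1 / (N : ℂ)) * ∑ n ∈ Finset.Icc 1 N,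
                  a n * (starRingEnd ℂ) (a (n + h))‖) atTop := by
  refine ⟨4, by norm_num, fun a ha H hH => ?_⟩
  set f : ℕ → ℝ → ℝ := fun N t =>
    ‖(1 / (N : ℂ)) * ∑ n ∈ Finset.Icc 1 N,
      a n * Complex.exp (2 * (Real.pi : ℂ) * Complex.I * (n : ℂ) * (t : ℂ))‖ ^ 2 with hf
  set u : ℕ → ℝ := fun N => ⨆ t : ℝ, f N t with hu
  set r : ℕ → ℕ → ℝ := fun h N => ‖(1 / (N : ℂ)) * ∑ n ∈ Finset.Icc 1 N,
    a n * (starRingEnd ℂ) (a (n + h))‖ with hr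
  set L : ℕ → ℝ := fun h => limsup (r h) atTop with hL
  have hHR : (0 : ℝ) < H := by exact_mod_cast hH
  -- bounds on f
  have hfle : ∀ N t, f N t ≤ 1 := by
    intro N t
    have := vdc_norm_avg_le_one
      (fun n => a n * Complex.exp (2 * (Real.pi : ℂ) * Complex.I * (n : ℂ) * (t : ℂ)))
      (fun n => by rw [norm_mul, vdc_abs_exp, mul_one]; exact ha n) N
    exact pow_le_one₀ (norm_nonneg _) this
  have hfnn : ∀ N t, 0 ≤ f N t := fun N t => sq_nonneg _
  have hbdd : ∀ N, BddAbove (Set.range (f N)) := by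
    intro N; exact ⟨1, by rintro x ⟨t, rfl⟩; exact hfle N t⟩
  have hule : ∀ N, u N ≤ 1 := fun N => ciSup_le fun t => hfle N t
  have hunn : ∀ N, 0 ≤ u N := fun N => le_trans (hfnn N 0) (le_ciSup (hbdd N) 0)
  -- bounds on r
  have hrle : ∀ h N, r h N ≤ 1 := fun h N =>
    vdc_norm_avg_le_one _ (fun n => vdc_corr_abs_le a ha n h) N
  have hrnn : ∀ h N, 0 ≤ r h N := fun h N => norm_nonneg _
  have hrbdd : ∀ h, IsBoundedUnder (· ≤ ·) atTop (r h) := fun h =>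
    isBoundedUnder_of ⟨1, fun N => hrle h N⟩
  have hLnn : ∀ h, 0 ≤ L h := fun h =>
    le_limsup_of_frequently_le ((Eventually.of_forall fun N => hrnn h N).frequently) (hrbdd h)
  have hucobdd : IsCoboundedUnder (· ≤ ·) atTop u :=
    (isBoundedUnder_of ⟨0, fun N => hunn N⟩ :
      IsBoundedUnder (· ≥ ·) atTop u).isCoboundedUnder_le
  obtain ⟨T, hT⟩ : ∃ T : ℝ, T = 4 / H + (4 / H) * ∑ h ∈ Finset.Icc 1 H, L h := ⟨_, rfl⟩
  have key : ∀ ε : ℝ, 0 < ε → limsup u atTop ≤ T + 5 * ε := by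
    intro ε hε
    have evA : ∀ᶠ N in atTop, ∀ h ∈ Finset.Icc 1 H, r h N < L h + ε := by
      rw [eventually_all_finset]
      intro h _
      exact eventually_lt_of_limsup_lt (by linarith [hLnn h]) (hrbdd h)
    have evB : ∀ᶠ N : ℕ in atTop, (4 * (H : ℝ) + 8 * (H : ℝ) ^ 2) / (N : ℝ) < ε := by
      have h0 := tendsto_const_div_atTop_nhds_zero_nat (4 * (H : ℝ) + 8 * (H : ℝ) ^ 2)
      exact h0.eventually_lt_const hε
    have evC : ∀ᶠ N : ℕ in atTop, 1 ≤ N := eventually_ge_atTop 1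
    have evAll : ∀ᶠ N in atTop, u N ≤ T + 5 * ε := by
      filter_upwards [evA, evB, evC] with N hA hB hC
      refine ciSup_le fun t => ?_
      have hpt := vdc_pointwise a ha H hH N hC t
      have hsum : ∑ h ∈ Finset.Icc 1 H, r h N
          ≤ ∑ h ∈ Finset.Icc 1 H, (L h + ε) :=
        Finset.sum_le_sum fun h hh => le_of_lt (hA h hh)
      have hsum2 : ∑ h ∈ Finset.Icc 1 H, (L h + ε)
          = (∑ h ∈ Finset.Icc 1 H, L h) + H * ε := by
        rw [Finset.sum_add_distrib, Finset.sum_const, Nat.card_Icc]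
        simp [nsmul_eq_mul]
      have h4H : (0 : ℝ) < 4 / H := by positivity
      have step : f N t ≤ 4 / H + (4 / H) * ((∑ h ∈ Finset.Icc 1 H, L h) + H * ε) + ε := by
        calc f N t ≤ 4 / H + (4 / H) * (∑ h ∈ Finset.Icc 1 H, r h N)
              + (4 * H + 8 * H ^ 2) / N := hpt
          _ ≤ 4 / H + (4 / H) * ((∑ h ∈ Finset.Icc 1 H, L h) + H * ε) + ε := by
              have := mul_le_mul_of_nonneg_left (le_trans hsum (le_of_eq hsum2)) h4H.le
              linarith
      have hHε : (4 / (H : ℝ)) * ((H : ℝ) * ε) = 4 * ε := by field_simp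
      calc f N t ≤ 4 / H + (4 / H) * ((∑ h ∈ Finset.Icc 1 H, L h) + H * ε) + ε := step
        _ = T + 4 * ε + ε := by rw [hT, mul_add, hHε]; ring
        _ ≤ T + 5 * ε := by linarith
    exact limsup_le_of_le hucobdd evAll
  have final : limsup u atTop ≤ T := by
    by_contra hcon
    push_neg at hcon
    have := key ((limsup u atTop - T) / 6) (by linarith)
    linarith
  rw [hT] at final
  exact final
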